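/- Let a ≥ 2 and let A = (a, b_1, …, b_k) be positive integers with gcd(A) = 1. Then the Sylvester number satisfies n(A) = (1/a)·∑_{r=1}^{a−1} N_r − (a−1)/2. -/

import Mathlib

/-- `m` is representable by the sequence `A`. -/
def IsRepresentable {n : ℕ} (A : Fin n → ℕ) (m : ℕ) : Prop :=
  ∃ x : Fin n → ℕ, m = ∑ i, A i * x i

/-- `N_r`: the least nonnegative integer congruent to `r` modulo `a` that is
representable by `B`. -/
noncomputable def Nres {k : ℕ} (a : ℕ) (B : Fin k → ℕ) (r : ℕ) : ℕ :=
  sInf {m : ℕ | m % a = r ∧ IsRepresentable B m}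

namespace SylvAux

variable {k : ℕ} (a : ℕ) (B : Fin k → ℕ)

/-- The set of elements of `ZMod a` hit by nonnegative combinations of the `B i`. -/
def Hit : Set (ZMod a) := {z | ∃ x : Fin k → ℕ, z = ∑ i, (B i : ZMod a) * (x i : ZMod a)}

lemma hit_cast_sum (x : Fin k → ℕ) : ((∑ i, B i * x i : ℕ) : ZMod a) ∈ Hit a B := by
  exact ⟨x, by push_cast; ring⟩

lemma hit_gen (i : Fin k) : ((B i : ℕ) : ZMod a) ∈ Hit a B := by
  refine ⟨fun j => if j = i then 1 else 0, ?_⟩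
  simp [mul_ite, Finset.sum_ite_eq']

lemma hit_zero : (0 : ZMod a) ∈ Hit a B := ⟨0, by simp⟩

lemma hit_add {z w : ZMod a} (hz : z ∈ Hit a B) (hw : w ∈ Hit a B) :
    z + w ∈ Hit a B := by
  obtain ⟨x, rfl⟩ := hz; obtain ⟨y, rfl⟩ := hw
  refine ⟨x + y, ?_⟩
  rw [← Finset.sum_add_distrib]
  refine Finset.sum_congr rfl fun i _ => ?_
  simp [Pi.add_apply]
  push_cast
  ring

lemma hit_nsmul {z : ZMod a} (hz : z ∈ Hit a B) (n : ℕ) : n • z ∈ Hit a B := by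
  obtain ⟨x, rfl⟩ := hz
  refine ⟨fun i => n * x i, ?_⟩
  rw [Finset.smul_sum]
  refine Finset.sum_congr rfl fun i _ => ?_
  push_cast
  ring

lemma hit_neg (ha : 2 ≤ a) {z : ZMod a} (hz : z ∈ Hit a B) : -z ∈ Hit a B := by
  have := hit_nsmul a B hz (a - 1)
  have hcast : ((a - 1 : ℕ) : ZMod a) = -1 := by
    have : ((a - 1 : ℕ) : ZMod a) = (a : ZMod a) - 1 := by
      have h1 : 1 ≤ a := by omega
      push_cast [Nat.cast_sub h1]
      ring
    rw [this, ZMod.natCast_self]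
    ring
  rwa [nsmul_eq_mul, hcast, neg_one_mul] at this

lemma hit_zsmul (ha : 2 ≤ a) {z : ZMod a} (hz : z ∈ Hit a B) (n : ℤ) :
    n • z ∈ Hit a B := by
  rcases n with n | n
  · simpa using hit_nsmul a B hz n
  · have h := hit_neg a B ha (hit_nsmul a B hz (n + 1))
    simpa [Int.negSucc_eq, add_smul] using h

lemma hit_gcd (ha : 2 ≤ a) (s : Finset (Fin k)) :
    ((s.gcd B : ℕ) : ZMod a) ∈ Hit a B := by
  classical
  induction s using Finset.induction_on with
  | empty => simpa using hit_zero a B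
  | insert i s' hi ih =>
    rw [Finset.gcd_insert]
    set x := B i
    set y := s'.gcd B
    have hx : ((x : ℕ) : ZMod a) ∈ Hit a B := hit_gen a B i
    have hbez : ((Nat.gcd x y : ℤ) : ZMod a) =
        (Nat.gcdA x y) • ((x : ℕ) : ZMod a) + (Nat.gcdB x y) • ((y : ℕ) : ZMod a) := by
      rw [Nat.gcd_eq_gcd_ab x y]
      push_cast
      simp [zsmul_eq_mul]
      ring
    have : ((Nat.gcd x y : ℕ) : ZMod a) =
        (Nat.gcdA x y) • ((x : ℕ) : ZMod a) + (Nat.gcdB x y) • ((y : ℕ) : ZMod a) := by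
      rw [← hbez]; push_cast; ring
    rw [show (GCDMonoid.gcd x y : ℕ) = Nat.gcd x y from rfl, this]
    exact hit_add a B (hit_zsmul a B ha hx _) (hit_zsmul a B ha ih _)

lemma exists_rep_mod (ha : 2 ≤ a) (hcop : Nat.Coprime a (Finset.univ.gcd B)) (r : ℕ) :
    ∃ m : ℕ, m % a = r % a ∧ IsRepresentable B m := by
  haveI : NeZero a := ⟨by omega⟩
  set g := Finset.univ.gcd B with hg
  have hgmem : ((g : ℕ) : ZMod a) ∈ Hit a B := hit_gcd a B ha Finset.univ
  -- 1 ∈ Hit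
  have hone : (1 : ZMod a) ∈ Hit a B := by
    have hu : Nat.Coprime g a := (Nat.coprime_comm.mp hcop)
    set u : (ZMod a)ˣ := ZMod.unitOfCoprime g hu
    have hu1 : ((u⁻¹ : (ZMod a)ˣ) : ZMod a) * ((g : ℕ) : ZMod a) = 1 := by
      have : ((u : (ZMod a)ˣ) : ZMod a) = ((g : ℕ) : ZMod a) := rfl
      rw [← this, Units.inv_mul]
    set w : ZMod a := ((u⁻¹ : (ZMod a)ˣ) : ZMod a)
    have hval : ((w.val : ℕ) : ZMod a) = w := by
      rw [ZMod.natCast_val, ZMod.cast_id]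
    have := hit_nsmul a B hgmem w.val
    rwa [nsmul_eq_mul, hval, hu1] at this
  have hr : ((r : ℕ) : ZMod a) ∈ Hit a B := by
    have := hit_nsmul a B hone r
    rwa [nsmul_eq_mul, mul_one] at this
  obtain ⟨x, hx⟩ := hr
  refine ⟨∑ i, B i * x i, ?_, ⟨x, rfl⟩⟩
  have : ((∑ i, B i * x i : ℕ) : ZMod a) = ((r : ℕ) : ZMod a) := by
    rw [hx]; push_cast; ring
  exact (ZMod.natCast_eq_natCast_iff _ _ _).mp this

end SylvAux

/-- For `A = (a, b₁, …, b_k)` with `gcd(A) = 1` and `a ≥ 2`, the Sylvester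
number satisfies `n(A) = (1/a)·∑_{r=1}^{a-1} N_r - (a-1)/2`. -/
theorem stmt_1 {k : ℕ} (a : ℕ) (ha : 2 ≤ a) (B : Fin k → ℕ)
    (hBpos : ∀ i, 0 < B i)
    (hgcd : Finset.univ.gcd (Fin.cons a B) = 1) :
    (({m : ℕ | ¬ IsRepresentable (Fin.cons a B) m}.ncard : ℚ)) =
      (1 / a) * ∑ r ∈ Finset.Ico 1 a, (Nres a B r : ℚ) - (a - 1) / 2 := by
  classical
  have ha0 : 0 < a := by omega
  have haQ : (a : ℚ) ≠ 0 := Nat.cast_ne_zero.mpr (by omega)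
  -- coprimality
  have hcop : Nat.Coprime a (Finset.univ.gcd B) := by
    have hdvd : Nat.gcd a (Finset.univ.gcd B) ∣ Finset.univ.gcd (Fin.cons a B) := by
      refine Finset.dvd_gcd fun i _ => ?_
      rcases Fin.eq_zero_or_eq_succ i with rfl | ⟨j, rfl⟩
      · simpa using Nat.gcd_dvd_left a _
      · rw [Fin.cons_succ]
        exact (Nat.gcd_dvd_right a _).trans (Finset.gcd_dvd (Finset.mem_univ j))
    rw [hgcd] at hdvd
    exact Nat.eq_one_of_dvd_one hdvd
  -- Nres facts
  have hNmem : ∀ r < a, (Nres a B r) % a = r ∧ IsRepresentable B (Nres a B r) := by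
    intro r hr
    obtain ⟨m, hm1, hm2⟩ := SylvAux.exists_rep_mod a B ha hcop r
    rw [Nat.mod_eq_of_lt hr] at hm1
    exact Nat.sInf_mem (⟨m, hm1, hm2⟩ : {m : ℕ | m % a = r ∧ IsRepresentable B m}.Nonempty)
  have hNle : ∀ r, ∀ m, m % a = r → IsRepresentable B m → Nres a B r ≤ m :=
    fun r m h1 h2 => Nat.sInf_le ⟨h1, h2⟩
  have hN0 : Nres a B 0 = 0 :=
    Nat.le_zero.mp (hNle 0 0 (Nat.zero_mod a) ⟨0, by simp⟩)
  have hrleN : ∀ r < a, r ≤ Nres a B r := by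
    intro r hr
    have h := (hNmem r hr).1
    have := Nat.mod_le (Nres a B r) a
    omega
  have hdvdN : ∀ r < a, a ∣ Nres a B r - r := by
    intro r hr
    have h1 := (hNmem r hr).1
    have := Nat.div_add_mod (Nres a B r) a
    exact ⟨Nres a B r / a, by omega⟩
  -- key equivalence
  have key : ∀ m, ¬ IsRepresentable (Fin.cons a B) m ↔ m < Nres a B (m % a) := by
    intro m
    rw [← not_le]
    apply not_congr
    constructor
    · rintro ⟨y, rfl⟩
      set s := ∑ i, B i * y i.succ with hs
      have hsum : ∑ i, (Fin.cons a B : Fin (k+1) → ℕ) i * y i = a * y 0 + s := by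
        rw [Fin.sum_univ_succ]
        simp [hs, Fin.cons_succ]
      rw [hsum]
      have hmod : (a * y 0 + s) % a = s % a := by
        simp [Nat.add_mul_mod_self_left, Nat.mul_mod_right, Nat.add_mod]
      rw [hmod]
      calc Nres a B (s % a) ≤ s := hNle _ s rfl ⟨fun i => y i.succ, rfl⟩
        _ ≤ a * y 0 + s := by omega
    · intro hle
      set r := m % a with hr
      have hrlt : r < a := Nat.mod_lt _ ha0
      obtain ⟨hN1, x, hN2⟩ := hNmem r hrlt
      have hdvd : a ∣ m - Nres a B r := by
        refine (Nat.modEq_iff_dvd' hle).mp ?_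
        unfold Nat.ModEq
        rw [hN1, hr]
      obtain ⟨t, ht⟩ := hdvd
      refine ⟨Fin.cons (α := fun _ => ℕ) t x, ?_⟩
      rw [Fin.sum_univ_succ]
      simp only [Fin.cons_zero, Fin.cons_succ]
      omega
  -- the set of non-representables as a finset
  set T : Finset ℕ := (Finset.range a).biUnion
      (fun r => (Finset.range ((Nres a B r - r) / a)).image (fun j => r + a * j)) with hT
  have hmemT : ∀ m, m ∈ T ↔ m < Nres a B (m % a) := by
    intro m
    simp only [hT, Finset.mem_biUnion, Finset.mem_range, Finset.mem_image]
    constructor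
    · rintro ⟨r, hr, j, hj, rfl⟩
      have hmod : (r + a * j) % a = r := by
        rw [Nat.add_mul_mod_self_left, Nat.mod_eq_of_lt hr]
      rw [hmod]
      have hq : a * ((Nres a B r - r) / a) = Nres a B r - r :=
        Nat.mul_div_cancel' (hdvdN r hr)
      have hrN := hrleN r hr
      have h5 : a * j < a * ((Nres a B r - r) / a) := by
        exact mul_lt_mul_of_pos_left hj ha0
      rw [hq] at h5
      omega
    · intro hlt
      have hrlt : m % a < a := Nat.mod_lt _ ha0
      refine ⟨m % a, hrlt, m / a, ?_, Nat.mod_add_div m a⟩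
      have hq : a * ((Nres a B (m % a) - m % a) / a) = Nres a B (m % a) - m % a :=
        Nat.mul_div_cancel' (hdvdN _ hrlt)
      have hrN := hrleN _ hrlt
      have hdm := Nat.mod_add_div m a
      have h5 : a * (m / a) < a * ((Nres a B (m % a) - m % a) / a) := by
        rw [hq]; omega
      exact lt_of_mul_lt_mul_left h5 (Nat.zero_le a)
  have hSet : {m : ℕ | ¬ IsRepresentable (Fin.cons a B) m} = ↑T := by
    ext m
    simp only [Set.mem_setOf_eq, Finset.coe_sort_coe, Finset.mem_coe, hmemT, key]
  rw [hSet, Set.ncard_coe_finset]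
  -- card computation
  have hdisj : ∀ r ∈ Finset.range a, ∀ r' ∈ Finset.range a, r ≠ r' →
      Disjoint ((Finset.range ((Nres a B r - r) / a)).image (fun j => r + a * j))
        ((Finset.range ((Nres a B r' - r') / a)).image (fun j => r' + a * j)) := by
    intro r hr r' hr' hne
    rw [Finset.mem_range] at hr hr'
    rw [Finset.disjoint_left]
    rintro m hm hm'
    simp only [Finset.mem_image, Finset.mem_range] at hm hm'
    obtain ⟨j, _, rfl⟩ := hm
    obtain ⟨j', _, hj'⟩ := hm'
    apply hne
    have h1 : (r + a * j) % a = r := by rw [Nat.add_mul_mod_self_left, Nat.mod_eq_of_lt hr]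
    have h2 : (r' + a * j') % a = r' := by rw [Nat.add_mul_mod_self_left, Nat.mod_eq_of_lt hr']
    rw [← h1, ← hj', h2]
  have hcard : T.card = ∑ r ∈ Finset.range a, (Nres a B r - r) / a := by
    rw [hT, Finset.card_biUnion hdisj]
    refine Finset.sum_congr rfl fun r _ => ?_
    rw [Finset.card_image_of_injective _ (fun j j' h => by
      exact Nat.eq_of_mul_eq_mul_left ha0 (by omega : a * j = a * j')), Finset.card_range]
  rw [hcard]
  -- cast to ℚ
  have hterm : ∀ r < a, (((Nres a B r - r) / a : ℕ) : ℚ) = ((Nres a B r : ℚ) - r) / a := by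
    intro r hr
    rw [Nat.cast_div (hdvdN r hr) haQ, Nat.cast_sub (hrleN r hr)]
  rw [Nat.cast_sum]
  have hsplit : ∑ r ∈ Finset.range a, (((Nres a B r - r) / a : ℕ) : ℚ) =
      ∑ r ∈ Finset.Ico 1 a, ((Nres a B r : ℚ) - r) / a := by
    rw [Finset.range_eq_Ico, Finset.sum_eq_sum_Ico_succ_bot ha0]
    rw [hN0]
    simp only [Nat.sub_zero, Nat.zero_div, Nat.cast_zero, zero_add]
    exact Finset.sum_congr rfl fun r hr => hterm r (Finset.mem_Ico.mp hr).2
  rw [hsplit]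
  have hgauss : ∑ r ∈ Finset.Ico 1 a, (r : ℚ) = (a : ℚ) * ((a : ℚ) - 1) / 2 := by
    have h1 : ∑ r ∈ Finset.Ico 1 a, (r : ℚ) = ∑ r ∈ Finset.range a, (r : ℚ) := by
      rw [Finset.range_eq_Ico, Finset.sum_eq_sum_Ico_succ_bot ha0]
      simp
    have h3 : (∑ i ∈ Finset.range a, (i : ℚ)) * 2 = (a : ℚ) * ((a : ℚ) - 1) := by
      have h2 := Finset.sum_range_id_mul_two a
      have h4 := congrArg (Nat.cast : ℕ → ℚ) h2
      push_cast [Nat.cast_sub (show 1 ≤ a by omega)] at h4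
      linarith
    rw [h1]
    linarith
  have hsum2 : ∑ r ∈ Finset.Ico 1 a, ((Nres a B r : ℚ) - r) / a
      = (∑ r ∈ Finset.Ico 1 a, (Nres a B r : ℚ)) / a - (∑ r ∈ Finset.Ico 1 a, (r : ℚ)) / a := by
    rw [Finset.sum_div, Finset.sum_div, ← Finset.sum_sub_distrib]
    exact Finset.sum_congr rfl fun r _ => by ring
  rw [hsum2, hgauss]
  field_simp
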